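/- Let H be a real Hilbert space, T : H → Set H a monotone set-valued operator, a, b ≥ 0, and z ∈ H with 0 ∉ T(z). Assume that for every ρ > 0 there exists a (necessarily unique) point x_ρ ∈ H with z − x_ρ ∈ ρ T(x_ρ), and define ψ(ρ) := aρ² + bρ + (ρ‖x_ρ − z‖)². Then: (i) ψ(ρ) > 0 for every ρ > 0; (ii) ψ is strictly increasing and continuous on (0, ∞); (iii) ψ(ρ) → 0 as ρ → 0⁺ and ψ(ρ) → ∞ as ρ → ∞. -/

import Mathlib

open scoped RealInnerProductSpace

/-- The stepsize-selection function `ψ(ρ) := aρ² + bρ + (ρ‖x_ρ − z‖)²`, where `x_ρ = J_{ρT}(z)`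
is given by the selection `x : ℝ → H`. -/
noncomputable def psiFun {H : Type*} [NormedAddCommGroup H] (a b : ℝ) (z : H) (x : ℝ → H)
    (ρ : ℝ) : ℝ :=
  a * ρ ^ 2 + b * ρ + (ρ * ‖x ρ - z‖) ^ 2

/-- If `T` is monotone, `0 ∉ T(z)`, and for each `ρ > 0` the resolvent
`x ρ = J_{ρT}(z)` exists, then `ψ(ρ) := aρ² + bρ + (ρ‖x ρ − z‖)²` is positive, strictly
increasing and continuous on `(0, ∞)`, tends to `0` as `ρ → 0⁺` and to `∞` as `ρ → ∞`. -/
theorem psi_pos_strictMono_continuous_tendsto {H : Type*} [NormedAddCommGroup H]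
    [InnerProductSpace ℝ H]
    (T : H → Set H)
    (hT : ∀ x y u v, u ∈ T x → v ∈ T y → 0 ≤ ⟪x - y, u - v⟫)
    (a b : ℝ) (ha : 0 ≤ a) (hb : 0 ≤ b)
    (z : H) (hz : (0 : H) ∉ T z)
    (x : ℝ → H) (hx : ∀ ρ > (0 : ℝ), ∃ v ∈ T (x ρ), z - x ρ = ρ • v) :
    (∀ ρ > (0 : ℝ), 0 < psiFun a b z x ρ) ∧
      StrictMonoOn (psiFun a b z x) (Set.Ioi 0) ∧
      ContinuousOn (psiFun a b z x) (Set.Ioi 0) ∧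
      Filter.Tendsto (psiFun a b z x) (nhdsWithin 0 (Set.Ioi 0)) (nhds 0) ∧
      Filter.Tendsto (psiFun a b z x) Filter.atTop Filter.atTop := by
  -- abbreviation
  set f : ℝ → ℝ := fun ρ => ‖x ρ - z‖ with hfdef
  have hf0 : ∀ ρ : ℝ, 0 ≤ f ρ := fun ρ => norm_nonneg _
  -- f is positive on (0,∞)
  have hfpos : ∀ ρ : ℝ, 0 < ρ → 0 < f ρ := by
    intro ρ hρ
    have hne : x ρ ≠ z := by
      intro hxz
      obtain ⟨v, hv, he⟩ := hx ρ hρ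
      have hv0 : v = 0 := by
        have h0 : ρ • v = 0 := by rw [← he, hxz, sub_self]
        exact (smul_eq_zero.mp h0).resolve_left hρ.ne'
      rw [hxz, hv0] at hv
      exact hz hv
    show (0 : ℝ) < ‖x ρ - z‖
    rw [norm_pos_iff, sub_ne_zero]
    exact hne
  -- the key inequality from monotonicity
  have key : ∀ ρ μ : ℝ, 0 < ρ → 0 < μ →
      μ * f ρ ^ 2 + ρ * f μ ^ 2 ≤ (μ + ρ) * (f ρ * f μ) := by
    intro ρ μ hρ hμ
    obtain ⟨vρ, hvρ, heρ⟩ := hx ρ hρ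
    obtain ⟨vμ, hvμ, heμ⟩ := hx μ hμ
    have hmon := hT (x ρ) (x μ) vρ vμ hvρ hvμ
    have hx' : x ρ - x μ = μ • vμ - ρ • vρ := by
      rw [← heρ, ← heμ]; abel
    rw [hx'] at hmon
    have hexp : ⟪μ • vμ - ρ • vρ, vρ - vμ⟫ =
        (μ + ρ) * ⟪vρ, vμ⟫ - μ * ‖vμ‖ ^ 2 - ρ * ‖vρ‖ ^ 2 := by
      simp only [inner_sub_left, inner_sub_right, real_inner_smul_left,
        real_inner_self_eq_norm_sq, real_inner_comm vμ vρ]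
      ring
    rw [hexp] at hmon
    have hCS : ⟪vρ, vμ⟫ ≤ ‖vρ‖ * ‖vμ‖ := real_inner_le_norm vρ vμ
    have h1 : f ρ = ρ * ‖vρ‖ := by
      simp only [hfdef]; rw [norm_sub_rev, heρ, norm_smul, Real.norm_of_nonneg hρ.le]
    have h2 : f μ = μ * ‖vμ‖ := by
      simp only [hfdef]; rw [norm_sub_rev, heμ, norm_smul, Real.norm_of_nonneg hμ.le]
    rw [h1, h2]
    nlinarith [mul_le_mul_of_nonneg_left hCS (add_pos hμ hρ).le, mul_pos hρ hμ,
      mul_nonneg (mul_pos hρ hμ).le hmon]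
  -- f is monotone on (0,∞)
  have hmono1 : ∀ ρ μ : ℝ, 0 < ρ → ρ ≤ μ → f ρ ≤ f μ := by
    intro ρ μ hρ hle
    by_contra hcon
    push_neg at hcon
    have hk := key ρ μ hρ (hρ.trans_le hle)
    have h1 : 0 < f ρ - f μ := sub_pos.2 hcon
    have h2 : 0 < μ * f ρ - ρ * f μ := by
      nlinarith [mul_pos hρ h1, mul_nonneg (sub_nonneg.2 hle) (hf0 ρ)]
    nlinarith [mul_pos h1 h2]
  -- ρ ↦ f ρ / ρ is antitone: ρ * f μ ≤ μ * f ρ for ρ ≤ μ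
  have hmono2 : ∀ ρ μ : ℝ, 0 < ρ → ρ ≤ μ → ρ * f μ ≤ μ * f ρ := by
    intro ρ μ hρ hle
    by_contra hcon
    push_neg at hcon
    have hμ : (0 : ℝ) < μ := hρ.trans_le hle
    have hk := key ρ μ hρ hμ
    have h1 : 0 < f μ - f ρ := by
      nlinarith [mul_nonneg (sub_nonneg.2 hle) (hf0 μ)]
    nlinarith [mul_pos h1 (sub_pos.2 hcon)]
  -- positivity of ψ
  have hpos : ∀ ρ > (0 : ℝ), 0 < psiFun a b z x ρ := by
    intro ρ hρ
    have h1 := hfpos ρ hρ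
    have : 0 < (ρ * f ρ) ^ 2 := by positivity
    have h2 : 0 ≤ a * ρ ^ 2 := mul_nonneg ha (sq_nonneg ρ)
    have h3 : 0 ≤ b * ρ := mul_nonneg hb hρ.le
    simp only [psiFun, hfdef] at *
    linarith
  refine ⟨hpos, ?_, ?_, ?_, ?_⟩
  · -- strict monotonicity
    intro ρ hρ μ hμ hlt
    simp only [Set.mem_Ioi] at hρ hμ
    have h1 := hfpos ρ hρ
    have h2 := hfpos μ hμ
    have h3 := hmono1 ρ μ hρ hlt.le
    have h4 : ρ * f ρ < μ * f μ := by nlinarith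
    have h5 : (ρ * f ρ) ^ 2 < (μ * f μ) ^ 2 := by
      have := mul_pos hρ h1
      nlinarith [mul_pos hρ h1, mul_pos hμ h2]
    have hsq : ρ ^ 2 ≤ μ ^ 2 := by nlinarith [mul_pos (sub_pos.2 hlt) (add_pos hρ hμ)]
    have h6 : a * ρ ^ 2 ≤ a * μ ^ 2 := mul_le_mul_of_nonneg_left hsq ha
    have h7 : b * ρ ≤ b * μ := mul_le_mul_of_nonneg_left hlt.le hb
    simp only [psiFun, hfdef] at *
    linarith
  · -- continuity
    have hfc : ContinuousOn f (Set.Ioi 0) := by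
      intro ρ0 hρ0
      simp only [Set.mem_Ioi] at hρ0
      have hlow : Filter.Tendsto (fun σ : ℝ => f ρ0 * min (σ / ρ0) 1)
          (nhdsWithin ρ0 (Set.Ioi 0)) (nhds (f ρ0)) := by
        have hc : Continuous (fun σ : ℝ => f ρ0 * min (σ / ρ0) 1) :=
          continuous_const.mul ((continuous_id.div_const ρ0).min continuous_const)
        have := (hc.tendsto ρ0).mono_left (nhdsWithin_le_nhds (s := Set.Ioi (0:ℝ)))
        simpa [div_self hρ0.ne', min_self] using this
      have hupp : Filter.Tendsto (fun σ : ℝ => f ρ0 * max (σ / ρ0) 1)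
          (nhdsWithin ρ0 (Set.Ioi 0)) (nhds (f ρ0)) := by
        have hc : Continuous (fun σ : ℝ => f ρ0 * max (σ / ρ0) 1) :=
          continuous_const.mul ((continuous_id.div_const ρ0).max continuous_const)
        have := (hc.tendsto ρ0).mono_left (nhdsWithin_le_nhds (s := Set.Ioi (0:ℝ)))
        simpa [div_self hρ0.ne', max_self] using this
      refine tendsto_of_tendsto_of_tendsto_of_le_of_le' hlow hupp ?_ ?_
      · filter_upwards [self_mem_nhdsWithin] with σ hσ
        simp only [Set.mem_Ioi] at hσ
        rcases le_total σ ρ0 with h | h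
        · rw [min_eq_left (by rw [div_le_one hρ0]; exact h)]
          rw [mul_comm, div_mul_eq_mul_div, div_le_iff₀ hρ0]
          have := hmono2 σ ρ0 hσ h
          nlinarith
        · calc f ρ0 * min (σ / ρ0) 1 ≤ f ρ0 * 1 :=
                mul_le_mul_of_nonneg_left (min_le_right _ _) (hf0 ρ0)
          _ = f ρ0 := mul_one _
          _ ≤ f σ := hmono1 ρ0 σ hρ0 h
      · filter_upwards [self_mem_nhdsWithin] with σ hσ
        simp only [Set.mem_Ioi] at hσ
        rcases le_total σ ρ0 with h | h
        · calc f σ ≤ f ρ0 := hmono1 σ ρ0 hσ h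
          _ = f ρ0 * 1 := (mul_one _).symm
          _ ≤ f ρ0 * max (σ / ρ0) 1 :=
                mul_le_mul_of_nonneg_left (le_max_right _ _) (hf0 ρ0)
        · rw [max_eq_left (by rw [le_div_iff₀ hρ0]; linarith)]
          rw [mul_comm, div_mul_eq_mul_div, le_div_iff₀ hρ0]
          have := hmono2 ρ0 σ hρ0 h
          nlinarith
    have : ContinuousOn (psiFun a b z x) (Set.Ioi 0) := by
      have h1 : ContinuousOn (fun ρ : ℝ => a * ρ ^ 2 + b * ρ) (Set.Ioi 0) :=
        ((continuous_const.mul (continuous_pow 2)).add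
          (continuous_const.mul continuous_id)).continuousOn
      have h2 : ContinuousOn (fun ρ : ℝ => (ρ * f ρ) ^ 2) (Set.Ioi 0) :=
        (continuousOn_id.mul hfc).pow 2
      have := h1.add h2
      exact this
    exact this
  · -- limit at 0⁺
    have hupp : Filter.Tendsto (fun ρ : ℝ => a * ρ ^ 2 + b * ρ + (ρ * f 1) ^ 2)
        (nhdsWithin 0 (Set.Ioi 0)) (nhds 0) := by
      have hc : Continuous (fun ρ : ℝ => a * ρ ^ 2 + b * ρ + (ρ * f 1) ^ 2) := by
        continuity
      have := (hc.tendsto 0).mono_left (nhdsWithin_le_nhds (s := Set.Ioi (0:ℝ)))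
      simpa using this
    refine tendsto_of_tendsto_of_tendsto_of_le_of_le' tendsto_const_nhds hupp ?_ ?_
    · filter_upwards [self_mem_nhdsWithin] with ρ hρ
      exact (hpos ρ hρ).le
    · filter_upwards [Ioo_mem_nhdsGT_of_mem (Set.left_mem_Ico.mpr one_pos),
        self_mem_nhdsWithin] with ρ hρ1 hρ
      simp only [Set.mem_Ioo] at hρ1
      simp only [Set.mem_Ioi] at hρ
      have h1 : f ρ ≤ f 1 := hmono1 ρ 1 hρ hρ1.2.le
      simp only [psiFun, hfdef]
      have : (ρ * f ρ) ^ 2 ≤ (ρ * f 1) ^ 2 := by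
        have h2 : 0 ≤ ρ * f ρ := mul_nonneg hρ.le (hf0 ρ)
        exact pow_le_pow_left₀ h2 (mul_le_mul_of_nonneg_left h1 hρ.le) 2
      simp only [hfdef] at this
      linarith
  · -- limit at ∞
    have h1 : (0 : ℝ) < f 1 ^ 2 := pow_pos (hfpos 1 one_pos) 2
    have hbase : Filter.Tendsto (fun ρ : ℝ => f 1 ^ 2 * ρ ^ 2) Filter.atTop Filter.atTop :=
      (Filter.tendsto_pow_atTop two_ne_zero).const_mul_atTop h1
    refine Filter.tendsto_atTop_mono' _ ?_ hbase
    filter_upwards [Filter.eventually_ge_atTop (1 : ℝ)] with ρ hρ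
    have hρ0 : (0 : ℝ) < ρ := lt_of_lt_of_le one_pos hρ
    have h2 : f 1 ≤ f ρ := hmono1 1 ρ one_pos hρ
    have h3 : 0 ≤ a * ρ ^ 2 := mul_nonneg ha (sq_nonneg ρ)
    have h4 : 0 ≤ b * ρ := mul_nonneg hb hρ0.le
    have h5 : (ρ * f 1) ^ 2 ≤ (ρ * f ρ) ^ 2 := by
      have h6 : 0 ≤ ρ * f 1 := mul_nonneg hρ0.le (hf0 1)
      exact pow_le_pow_left₀ h6 (mul_le_mul_of_nonneg_left h2 hρ0.le) 2
    have hfeq : ∀ σ : ℝ, ‖x σ - z‖ = f σ := fun _ => rfl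
    simp only [psiFun, hfeq]
    calc f 1 ^ 2 * ρ ^ 2 = (ρ * f 1) ^ 2 := by ring
    _ ≤ (ρ * f ρ) ^ 2 := h5
    _ ≤ a * ρ ^ 2 + b * ρ + (ρ * f ρ) ^ 2 := by linarith
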